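/- arXiv:2112.10304 — 5 statements merged into one kernel-verified Lean document; each statement's English description precedes it below -/
import Mathlib

section
/- For any nonempty position P, the number of distinct positions reachable from P by a single chomp move equals the volume of P, i.e., |Mov P| = |P|. -/
/-- A position: a nonincreasing list of positive naturals (trailing zeros removed). -/
def IsPos (P : List ℕ) : Prop := P.Pairwise (· ≥ ·) ∧ ∀ a ∈ P, 0 < a

/-- The result of chomping position `P`, keeping the first `x` entries and
truncating all later entries to at most `a` (then removing zeros). -/
def chompAt (P : List ℕ) (x a : ℕ) : List ℕ :=
  (P.take x ++ (P.drop x).map (fun b => min b a)).filter (fun b => 0 < b)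

/-- A chomp move from `P` to `Q`. -/
def ChompMove (P Q : List ℕ) : Prop :=
  ∃ x a : ℕ, x < P.length ∧ Q = chompAt P x a ∧ Q ≠ P

lemma drop_le_getD (P : List ℕ) (hs : P.Pairwise (· ≥ ·)) (x : ℕ) (hx : x < P.length)
    (b : ℕ) (hb : b ∈ P.drop x) : b ≤ P.getD x 0 := by
  obtain ⟨j, hj, rfl⟩ := List.mem_iff_getElem.1 hb
  simp only [List.length_drop] at hj
  rw [List.getElem_drop, List.getD_eq_getElem _ _ hx]
  rcases Nat.eq_zero_or_pos j with h0 | h0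
  · simp [h0]
  · exact (List.pairwise_iff_getElem.1 hs) x (x + j) (by omega) (by omega) (by omega)

lemma chompAt_eq_self (P : List ℕ) (hs : P.Pairwise (· ≥ ·)) (hpos : ∀ a ∈ P, 0 < a)
    (x a : ℕ) (hx : x < P.length) (ha : P.getD x 0 ≤ a) : chompAt P x a = P := by
  have hmap : (P.drop x).map (fun b => min b a) = P.drop x := by
    conv_rhs => rw [← List.map_id (P.drop x)]
    apply List.map_congr_left
    intro b hb
    have := drop_le_getD P hs x hx b hb
    simp only [id]
    omega
  unfold chompAt
  rw [hmap, List.take_append_drop, List.filter_eq_self.2]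
  intro b hb
  simpa using hpos b hb

lemma chompAt_zero (P : List ℕ) (hpos : ∀ a ∈ P, 0 < a) (x : ℕ) :
    chompAt P x 0 = P.take x := by
  unfold chompAt
  rw [List.filter_append]
  have h1 : (P.take x).filter (fun b => 0 < b) = P.take x := by
    apply List.filter_eq_self.2
    intro b hb
    simpa using hpos b (List.mem_of_mem_take hb)
  have h2 : ((P.drop x).map (fun b => min b 0)).filter (fun b => 0 < b) = [] := by
    apply List.filter_eq_nil_iff.2
    intro b hb
    simp only [List.mem_map] at hb
    obtain ⟨c, _, rfl⟩ := hb
    simp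
  rw [h1, h2, List.append_nil]

lemma chompAt_pos (P : List ℕ) (hpos : ∀ a ∈ P, 0 < a) (x a : ℕ) (ha : 0 < a) :
    chompAt P x a = P.take x ++ (P.drop x).map (fun b => min b a) := by
  unfold chompAt
  apply List.filter_eq_self.2
  intro b hb
  rcases List.mem_append.1 hb with h | h
  · simpa using hpos b (List.mem_of_mem_take h)
  · simp only [List.mem_map] at h
    obtain ⟨c, hc, rfl⟩ := h
    have := hpos c (List.mem_of_mem_drop hc)
    simp; omega

lemma length_chompAt_pos (P : List ℕ) (hpos : ∀ a ∈ P, 0 < a) (x a : ℕ) (ha : 0 < a) :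
    (chompAt P x a).length = P.length := by
  rw [chompAt_pos P hpos x a ha]
  simp [List.length_take, List.length_drop]
  omega

lemma getElem_chompAt_lt (P : List ℕ) (hpos : ∀ a ∈ P, 0 < a) (x a i : ℕ) (ha : 0 < a)
    (hx : x ≤ P.length) (hi : i < x) (hi' : i < P.length) :
    (chompAt P x a)[i]'(by rw [length_chompAt_pos P hpos x a ha]; exact hi') = P[i] := by
  rw [List.getElem_of_eq (chompAt_pos P hpos x a ha)]
  rw [List.getElem_append_left (by simp [List.length_take]; omega)]
  simp [List.getElem_take]

lemma getElem_chompAt_ge (P : List ℕ) (hpos : ∀ a ∈ P, 0 < a) (x a i : ℕ) (ha : 0 < a)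
    (hx : x ≤ P.length) (hi : x ≤ i) (hi' : i < P.length) :
    (chompAt P x a)[i]'(by rw [length_chompAt_pos P hpos x a ha]; exact hi')
      = min (P[i]'hi') a := by
  rw [List.getElem_of_eq (chompAt_pos P hpos x a ha)]
  have htk : (P.take x).length = x := by simp [List.length_take]; omega
  rw [List.getElem_append_right (by omega)]
  simp only [htk]
  rw [List.getElem_map, List.getElem_drop]
  have hidx : x + (i - x) = i := by omega
  simp only [hidx]

lemma sum_getD (P : List ℕ) : ∑ i ∈ Finset.range P.length, P.getD i 0 = P.sum := by
  induction P with
  | nil => simp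
  | cons h t ih =>
    rw [List.length_cons, Finset.sum_range_succ']
    simp only [List.getD_cons_succ, List.getD_cons_zero, List.sum_cons]
    rw [ih]; ring

/-- the number of positions reachable from a nonempty position `P`
in one chomp move equals the volume of `P`. -/
theorem ncard_mov_eq_volume (P : List ℕ) (hP : IsPos P) (hne : P ≠ []) :
    Set.ncard {Q | ChompMove P Q} = P.sum := by
  classical
  obtain ⟨hs, hpos⟩ := hP
  set n := P.length with hn
  set T : Finset (ℕ × ℕ) :=
    (Finset.range n).biUnion (fun x => {x} ×ˢ Finset.range (P.getD x 0)) with hT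
  have hmemT : ∀ x a : ℕ, (x, a) ∈ T ↔ x < n ∧ a < P.getD x 0 := by
    intro x a
    simp only [hT, Finset.mem_biUnion, Finset.mem_range, Finset.mem_product,
      Finset.mem_singleton]
    constructor
    · rintro ⟨y, hy, rfl, h2⟩; exact ⟨hy, h2⟩
    · rintro ⟨h1, h2⟩; exact ⟨x, h1, rfl, h2⟩
  have hsetkey : {Q | ChompMove P Q} = ↑(T.image (fun p => chompAt P p.1 p.2)) := by
    ext Q
    simp only [Set.mem_setOf_eq, Finset.coe_image, Set.mem_image, Finset.mem_coe]
    constructor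
    · rintro ⟨x, a, hx, rfl, hne'⟩
      refine ⟨(x, a), (hmemT x a).2 ⟨hx, ?_⟩, rfl⟩
      by_contra h
      exact hne' (chompAt_eq_self P hs hpos x a hx (by omega))
    · rintro ⟨⟨x, a⟩, hmem, rfl⟩
      obtain ⟨hx, ha⟩ := (hmemT x a).1 hmem
      refine ⟨x, a, hx, rfl, ?_⟩
      have hPx : 0 < P.getD x 0 := by omega
      rcases Nat.eq_zero_or_pos a with h0 | h0
      · subst h0
        rw [chompAt_zero P hpos x]
        intro h
        have := congrArg List.length h
        simp only [List.length_take] at this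
        omega
      · intro h
        have hxval : P.getD x 0 = P[x]'hx := List.getD_eq_getElem _ _ hx
        have h1 := getElem_chompAt_ge P hpos x a x h0 (le_of_lt hx) le_rfl hx
        have h2 := List.getElem_of_eq h
          (i := x) (by rw [length_chompAt_pos P hpos x a h0]; exact hx)
        rw [h1] at h2
        omega
  rw [hsetkey, Set.ncard_coe_finset]
  rw [Finset.card_image_of_injOn, hT, Finset.card_biUnion]
  · simp only [Finset.card_product, Finset.card_singleton, Finset.card_range, one_mul]
    exact sum_getD P
  · intro x _ y _ hxy
    simp only [Finset.disjoint_left, Finset.mem_product, Finset.mem_singleton]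
    rintro ⟨p1, p2⟩ ⟨h1, _⟩ ⟨h2, _⟩
    exact hxy (h1 ▸ h2 ▸ rfl)
  · rintro ⟨x, a⟩ hxa ⟨y, b⟩ hyb heq
    simp only [Finset.mem_coe] at hxa hyb
    obtain ⟨hx, ha⟩ := (hmemT x a).1 hxa
    obtain ⟨hy, hb⟩ := (hmemT y b).1 hyb
    simp only at heq
    have hxval : P.getD x 0 = P[x]'hx := List.getD_eq_getElem _ _ hx
    have hyval : P.getD y 0 = P[y]'hy := List.getD_eq_getElem _ _ hy
    rcases Nat.eq_zero_or_pos a with ha0 | ha0 <;> rcases Nat.eq_zero_or_pos b with hb0 | hb0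
    · subst ha0; subst hb0
      rw [chompAt_zero P hpos, chompAt_zero P hpos] at heq
      have := congrArg List.length heq
      simp only [List.length_take] at this
      have : x = y := by omega
      simp [this]
    · subst ha0
      rw [chompAt_zero P hpos] at heq
      have := congrArg List.length heq
      rw [length_chompAt_pos P hpos y b hb0] at this
      simp only [List.length_take] at this
      omega
    · subst hb0
      rw [chompAt_zero P hpos] at heq
      have := congrArg List.length heq
      rw [length_chompAt_pos P hpos x a ha0] at this
      simp only [List.length_take] at this
      omega
    · have hxy : x = y := by
        by_contra hne'
        rcases Nat.lt_or_ge x y with hlt | hge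
        · have h1 := getElem_chompAt_ge P hpos x a x ha0 (le_of_lt hx) le_rfl hx
          have h2 := getElem_chompAt_lt P hpos y b x hb0 (le_of_lt hy) hlt hx
          have h3 := List.getElem_of_eq heq
            (i := x) (by rw [length_chompAt_pos P hpos x a ha0]; exact hx)
          rw [h1, h2] at h3
          omega
        · have hlt : y < x := by omega
          have h1 := getElem_chompAt_ge P hpos y b y hb0 (le_of_lt hy) le_rfl hy
          have h2 := getElem_chompAt_lt P hpos x a y ha0 (le_of_lt hx) hlt hy
          have h3 := List.getElem_of_eq heq
            (i := y) (by rw [length_chompAt_pos P hpos x a ha0]; exact hy)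
          rw [h1, h2] at h3
          omega
      subst hxy
      have h1 := getElem_chompAt_ge P hpos x a x ha0 (le_of_lt hx) le_rfl hx
      have h2 := getElem_chompAt_ge P hpos x b x hb0 (le_of_lt hx) le_rfl hx
      have h3 := List.getElem_of_eq heq
        (i := x) (by rw [length_chompAt_pos P hpos x a ha0]; exact hx)
      rw [h1, h2] at h3
      have : a = b := by omega
      simp [this]
end

section
/- For two rules f and g (possibly with different numbers of players), Sol_f P = Sol_g P for all nonempty positions P if and only if ord_f P = ord_g P for all nonempty positions P. -/
/-- `ord` is an ordinal assignment for the `n`-player rule `α` (with scores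
`α 1, ..., α n`): `ord [] = 0`, ordinals of nonempty positions lie in `[1, n]`,
and `α (ord P)` is the maximum of `α (ord Q + 1)` over moves `P → Q` with `ord Q ≠ n`. -/
structure IsOrd (n : ℕ) (α : ℕ → ℝ) (ord : List ℕ → ℕ) : Prop where
  ord_empty : ord [] = 0
  ord_mem : ∀ P, IsPos P → P ≠ [] → 1 ≤ ord P ∧ ord P ≤ n
  exists_best : ∀ P, IsPos P → P ≠ [] →
    ∃ Q, ChompMove P Q ∧ ord Q ≠ n ∧ ord P = ord Q + 1
  le_best : ∀ P, IsPos P → P ≠ [] → ∀ Q, ChompMove P Q → ord Q ≠ n →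
    α (ord Q + 1) ≤ α (ord P)

open Classical in
/-- The set of solution moves from `P`: optimal moves, with the player's
preference that a move to `[]` must be taken whenever it attains the maximum. -/
noncomputable def SolSet (n : ℕ) (α : ℕ → ℝ) (ord : List ℕ → ℕ) (P : List ℕ) :
    Set (List ℕ) :=
  if (∀ R, ChompMove P R → ord R ≠ n → α (ord R + 1) ≤ α 1) then {([] : List ℕ)}
  else {Q | ChompMove P Q ∧ ord Q ≠ n ∧
    ∀ R, ChompMove P R → ord R ≠ n → α (ord R + 1) ≤ α (ord Q + 1)}


lemma sum_filter_pos (l : List ℕ) : (l.filter (fun b => 0 < b)).sum = l.sum := by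
  induction l with
  | nil => rfl
  | cons a t ih =>
    by_cases h : 0 < a
    · simp [List.filter_cons, h, ih]
    · simp [List.filter_cons, h, ih]; omega

lemma sum_map_min_le (l : List ℕ) (a : ℕ) : (l.map (fun b => min b a)).sum ≤ l.sum := by
  induction l with
  | nil => simp
  | cons b t ih =>
    simp only [List.map_cons, List.sum_cons]
    exact Nat.add_le_add (min_le_left _ _) ih

lemma map_min_eq_of_sum (l : List ℕ) (a : ℕ) (h : (l.map (fun b => min b a)).sum = l.sum) :
    l.map (fun b => min b a) = l := by
  induction l with
  | nil => rfl
  | cons b t ih =>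
    simp only [List.map_cons, List.sum_cons] at h ⊢
    have h1 : min b a ≤ b := min_le_left _ _
    have h2 := sum_map_min_le t a
    have hb : min b a = b := by omega
    rw [hb, ih (by omega)]

lemma chompMove_isPos {P Q : List ℕ} (hP : IsPos P) (h : ChompMove P Q) : IsPos Q := by
  obtain ⟨x, a, -, rfl, -⟩ := h
  constructor
  · have hP' : (P.take x ++ P.drop x).Pairwise (· ≥ ·) := by
      rw [List.take_append_drop]; exact hP.1
    have h3 := List.pairwise_append.mp hP'
    have hpw : (P.take x ++ (P.drop x).map (fun b => min b a)).Pairwise (· ≥ ·) := by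
      rw [List.pairwise_append]
      refine ⟨h3.1, h3.2.1.map _ (fun u v huv => min_le_min huv le_rfl), ?_⟩
      intro b hb c hc
      simp only [List.mem_map] at hc
      obtain ⟨c', hc', rfl⟩ := hc
      exact le_trans (min_le_left _ _) (h3.2.2 b hb c' hc')
    exact hpw.sublist List.filter_sublist
  · intro b hb
    have := List.mem_filter.mp hb
    simpa using this.2

lemma chompMove_sum_lt {P Q : List ℕ} (hP : IsPos P) (h : ChompMove P Q) : Q.sum < P.sum := by
  obtain ⟨x, a, -, rfl, hne⟩ := h
  have hsum : (chompAt P x a).sum = (P.take x).sum + ((P.drop x).map (fun b => min b a)).sum := by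
    rw [chompAt, sum_filter_pos, List.sum_append]
  have hle := sum_map_min_le (P.drop x) a
  have hPsum : (P.take x).sum + (P.drop x).sum = P.sum := by
    rw [← List.sum_append, List.take_append_drop]
  rcases lt_or_eq_of_le hle with hlt | heq
  · omega
  · exfalso; apply hne
    have hmap := map_min_eq_of_sum (P.drop x) a heq
    rw [chompAt, hmap, List.take_append_drop]
    exact List.filter_eq_self.mpr (fun b hb => by simpa using hP.2 b hb)

lemma chompMove_empty {P : List ℕ} (hne : P ≠ []) : ChompMove P [] := by
  refine ⟨0, 0, List.length_pos_iff.mpr hne, ?_, fun h => hne h.symm⟩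
  rw [chompAt]
  simp [List.filter_eq_nil_iff]

lemma ord_le_n {n : ℕ} {α : ℕ → ℝ} {ord : List ℕ → ℕ} (h : IsOrd n α ord) {Q : List ℕ}
    (hQ : IsPos Q) : ord Q ≤ n := by
  rcases eq_or_ne Q [] with rfl | hne
  · simp [h.ord_empty]
  · exact (h.ord_mem Q hQ hne).2

lemma solSet_char {n : ℕ} {α : ℕ → ℝ} {ord : List ℕ → ℕ} (hn : 2 ≤ n)
    (hα : Set.InjOn α (Set.Icc 1 n)) (h : IsOrd n α ord)
    {P : List ℕ} (hP : IsPos P) (hne : P ≠ []) :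
    SolSet n α ord P =
      if ord P = 1 then {([] : List ℕ)}
      else {Q | ChompMove P Q ∧ ord Q + 1 = ord P} := by
  obtain ⟨Q0, hQ0m, hQ0n, hQ0⟩ := h.exists_best P hP hne
  have hordP := h.ord_mem P hP hne
  have hmemP : ord P ∈ Set.Icc 1 n := Set.mem_Icc.mpr hordP
  have hmem1 : (1:ℕ) ∈ Set.Icc 1 n := Set.mem_Icc.mpr ⟨le_rfl, by omega⟩
  have hcond : (∀ R, ChompMove P R → ord R ≠ n → α (ord R + 1) ≤ α 1) ↔ ord P = 1 := by
    constructor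
    · intro hc
      have h1 := hc Q0 hQ0m hQ0n
      rw [← hQ0] at h1
      have h2 : α 1 ≤ α (ord P) := by
        have := h.le_best P hP hne [] (chompMove_empty hne) (by rw [h.ord_empty]; omega)
        rwa [h.ord_empty] at this
      exact hα hmemP hmem1 (le_antisymm h1 h2)
    · intro h1 R hR hRn
      have := h.le_best P hP hne R hR hRn
      rwa [h1] at this
  rw [SolSet]
  by_cases hc : ∀ R, ChompMove P R → ord R ≠ n → α (ord R + 1) ≤ α 1
  · rw [if_pos hc, if_pos (hcond.mp hc)]
  · rw [if_neg hc, if_neg (fun h1 => hc (hcond.mpr h1))]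
    ext Q
    simp only [Set.mem_setOf_eq]
    constructor
    · rintro ⟨hQm, hQn, hmax⟩
      refine ⟨hQm, ?_⟩
      have h1 : α (ord Q0 + 1) ≤ α (ord Q + 1) := hmax Q0 hQ0m hQ0n
      have h2 : α (ord Q + 1) ≤ α (ord P) := h.le_best P hP hne Q hQm hQn
      have hQle : ord Q ≤ n := ord_le_n h (chompMove_isPos hP hQm)
      have hmemQ : ord Q + 1 ∈ Set.Icc 1 n := Set.mem_Icc.mpr ⟨by omega, by omega⟩
      refine hα hmemQ hmemP (le_antisymm h2 ?_)
      rwa [hQ0]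
    · rintro ⟨hQm, hQeq⟩
      have hQn : ord Q ≠ n := by
        have : ord P ≤ n := hordP.2
        omega
      refine ⟨hQm, hQn, fun R hR hRn => ?_⟩
      have := h.le_best P hP hne R hR hRn
      rwa [← hQeq] at this


/-- two rules have the same solution sets on all nonempty
positions iff they have the same ordinals on all nonempty positions. -/
theorem sol_eq_iff_ord_eq (n m : ℕ) (hn : 2 ≤ n) (hm : 2 ≤ m) (α β : ℕ → ℝ)
    (hα : Set.InjOn α (Set.Icc 1 n)) (hβ : Set.InjOn β (Set.Icc 1 m))
    (ordf ordg : List ℕ → ℕ) (hf : IsOrd n α ordf) (hg : IsOrd m β ordg) :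
    (∀ P, IsPos P → P ≠ [] → SolSet n α ordf P = SolSet m β ordg P) ↔
      (∀ P, IsPos P → P ≠ [] → ordf P = ordg P) := by
  constructor
  · intro hsol
    have key : ∀ N P, P.sum ≤ N → IsPos P → P ≠ [] → ordf P = ordg P := by
      intro N
      induction N with
      | zero =>
        intro P hs hP hne
        obtain ⟨a, t, rfl⟩ := List.exists_cons_of_ne_nil hne
        have := hP.2 a List.mem_cons_self
        simp only [List.sum_cons] at hs
        omega
      | succ N ih =>
        intro P hs hP hne
        have hchar_f := solSet_char hn hα hf hP hne
        have hchar_g := solSet_char hm hβ hg hP hne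
        have hsolP := hsol P hP hne
        have hiff1 : ordf P = 1 → ordg P = 1 := by
          intro h1
          by_contra h2
          rw [hchar_f, if_pos h1, hchar_g, if_neg h2] at hsolP
          obtain ⟨Q0, hQ0m, hQ0n, hQ0⟩ := hg.exists_best P hP hne
          have hmem : Q0 ∈ {Q | ChompMove P Q ∧ ordg Q + 1 = ordg P} := ⟨hQ0m, hQ0.symm⟩
          rw [← hsolP] at hmem
          have heq : Q0 = [] := hmem
          rw [heq, hg.ord_empty] at hQ0
          exact h2 hQ0
        have hiff2 : ordg P = 1 → ordf P = 1 := by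
          intro h1
          by_contra h2
          rw [hchar_g, if_pos h1, hchar_f, if_neg h2] at hsolP
          obtain ⟨Q0, hQ0m, hQ0n, hQ0⟩ := hf.exists_best P hP hne
          have hmem : Q0 ∈ {Q | ChompMove P Q ∧ ordf Q + 1 = ordf P} := ⟨hQ0m, hQ0.symm⟩
          rw [hsolP] at hmem
          have heq : Q0 = [] := hmem
          rw [heq, hf.ord_empty] at hQ0
          exact h2 hQ0
        by_cases h1 : ordf P = 1
        · rw [h1, hiff1 h1]
        · have h2 : ordg P ≠ 1 := fun h => h1 (hiff2 h)
          obtain ⟨Q0, hQ0m, hQ0n, hQ0⟩ := hf.exists_best P hP hne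
          have hQ0mem : Q0 ∈ SolSet n α ordf P := by
            rw [hchar_f, if_neg h1]; exact ⟨hQ0m, hQ0.symm⟩
          rw [hsolP, hchar_g, if_neg h2] at hQ0mem
          obtain ⟨-, hg0⟩ := hQ0mem
          have hQ0ne : Q0 ≠ [] := by
            intro h
            rw [h, hf.ord_empty] at hQ0
            exact h1 hQ0
          have hQ0pos : IsPos Q0 := chompMove_isPos hP hQ0m
          have hsum : Q0.sum ≤ N := by
            have := chompMove_sum_lt hP hQ0m
            omega
          rw [hQ0, ih Q0 hsum hQ0pos hQ0ne, hg0]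
    intro P hP hne
    exact key P.sum P le_rfl hP hne
  · intro hord P hP hne
    have hmove : ∀ Q, ChompMove P Q → ordf Q = ordg Q := by
      intro Q hQ
      rcases eq_or_ne Q [] with rfl | hQne
      · rw [hf.ord_empty, hg.ord_empty]
      · exact hord Q (chompMove_isPos hP hQ) hQne
    rw [solSet_char hn hα hf hP hne, solSet_char hm hβ hg hP hne, hord P hP hne]
    by_cases h1 : ordg P = 1
    · rw [if_pos h1, if_pos h1]
    · rw [if_neg h1, if_neg h1]
      ext Q
      simp only [Set.mem_setOf_eq]
      constructor
      · rintro ⟨hQm, he⟩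
        exact ⟨hQm, by rw [← hmove Q hQm]; exact he⟩
      · rintro ⟨hQm, he⟩
        exact ⟨hQm, by rw [hmove Q hQm]; exact he⟩
end

section
/- If f = (α_1,...,α_n) and g = (β_1,...,β_n) are n-player rules such that (α_i − α_j)(β_i − β_j) > 0 for all i ≠ j, then f and g are isomorphic: ord_f P = ord_g P for every nonempty position P. -/
lemma map_eq_of_sum_eq (l : List ℕ) (f : ℕ → ℕ) (hle : ∀ x ∈ l, f x ≤ x)
    (hsum : (l.map f).sum = l.sum) : l.map f = l := by
  induction l with
  | nil => rfl
  | cons a t ih =>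
    simp only [List.map_cons, List.sum_cons] at hsum ⊢
    have h1 : f a ≤ a := hle a (by simp)
    have h2 : (t.map f).sum ≤ t.sum := by
      have := List.sum_le_sum (l := t) (f := f) (g := id)
        (fun i hi => hle i (by simp [hi]))
      simpa using this
    have hfa : f a = a := by omega
    have : (t.map f).sum = t.sum := by omega
    rw [hfa, ih (fun x hx => hle x (by simp [hx])) this]

lemma chomp_isPos (P : List ℕ) (x a : ℕ) (hP : IsPos P) : IsPos (chompAt P x a) := by
  obtain ⟨hs, hpos⟩ := hP
  constructor
  · unfold chompAt
    apply List.Pairwise.sublist List.filter_sublist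
    rw [List.pairwise_append]
    have hsP : (P.take x ++ P.drop x).Pairwise (· ≥ ·) := by
      rw [List.take_append_drop]; exact hs
    rw [List.pairwise_append] at hsP
    refine ⟨hsP.1, ?_, ?_⟩
    · rw [List.pairwise_map]
      exact (hsP.2.1).imp (fun h => min_le_min h le_rfl)
    · intro b hb c hc
      rw [List.mem_map] at hc
      obtain ⟨d, hd, rfl⟩ := hc
      exact le_trans (min_le_left _ _) (hsP.2.2 b hb d hd)
  · intro b hb
    unfold chompAt at hb
    rw [List.mem_filter] at hb
    simpa using hb.2

lemma chomp_sum_lt (P : List ℕ) (x a : ℕ) (hP : IsPos P) :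
    chompAt P x a = P ∨ (chompAt P x a).sum < P.sum := by
  obtain ⟨hs, hpos⟩ := hP
  set d := P.drop x with hd
  have hmaple : ((d.map (fun b => min b a)).sum) ≤ d.sum := by
    have := List.sum_le_sum (l := d) (f := fun b => min b a) (g := id)
      (fun i _ => min_le_left i a)
    simpa using this
  rcases eq_or_lt_of_le hmaple with heq | hlt
  · left
    have hmap : d.map (fun b => min b a) = d :=
      map_eq_of_sum_eq d _ (fun b _ => min_le_left b a) heq
    unfold chompAt
    rw [← hd, hmap, List.take_append_drop]
    apply List.filter_eq_self.mpr
    intro b hb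
    simpa using hpos b hb
  · right
    have h1 : (chompAt P x a).sum ≤ (P.take x ++ d.map (fun b => min b a)).sum := by
      unfold chompAt
      exact List.filter_sublist.sum_le_sum (by intro b hb; positivity)
    have h2 : (P.take x ++ d.map (fun b => min b a)).sum
        < (P.take x ++ d).sum := by
      simp only [List.sum_append]; omega
    have h3 : (P.take x ++ d).sum = P.sum := by
      rw [hd, List.take_append_drop]
    omega

/-- order-isomorphic rules (same relative order of the scores)
induce the same ordinal on every nonempty position. -/
theorem ord_eq_of_same_order (n : ℕ) (hn : 2 ≤ n) (α β : ℕ → ℝ)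
    (hcomp : ∀ i ∈ Set.Icc 1 n, ∀ j ∈ Set.Icc 1 n, i ≠ j →
      0 < (α i - α j) * (β i - β j))
    (ordf ordg : List ℕ → ℕ) (hf : IsOrd n α ordf) (hg : IsOrd n β ordg) :
    ∀ P, IsPos P → P ≠ [] → ordf P = ordg P := by
  suffices H : ∀ m, ∀ P, P.sum < m → IsPos P → P ≠ [] → ordf P = ordg P by
    exact fun P hP hne => H (P.sum + 1) P (by omega) hP hne
  intro m
  induction m with
  | zero => intro P h; omega
  | succ m ih =>
    intro P hm hP hne
    have hQeq : ∀ Q, ChompMove P Q → ordf Q = ordg Q := by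
      intro Q hQ
      obtain ⟨x, a, hx, rfl, hne'⟩ := hQ
      have hQpos := chomp_isPos P x a hP
      rcases eq_or_ne (chompAt P x a) [] with h0 | h0
      · rw [h0, hf.ord_empty, hg.ord_empty]
      · rcases chomp_sum_lt P x a hP with h | h
        · exact absurd h hne'
        · exact ih _ (by omega) hQpos h0
    obtain ⟨Q0, hQ0, hQ0n, hq⟩ := hf.exists_best P hP hne
    obtain ⟨Q1, hQ1, hQ1n, hr⟩ := hg.exists_best P hP hne
    have e0 := hQeq Q0 hQ0
    have e1 := hQeq Q1 hQ1
    have hb : β (ordf P) ≤ β (ordg P) := by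
      have := hg.le_best P hP hne Q0 hQ0 (e0 ▸ hQ0n)
      rwa [← e0, ← hq] at this
    have ha : α (ordg P) ≤ α (ordf P) := by
      have := hf.le_best P hP hne Q1 hQ1 (e1 ▸ hQ1n)
      rwa [e1, ← hr] at this
    by_contra hqr
    have hqm := hf.ord_mem P hP hne
    have hrm := hg.ord_mem P hP hne
    have := hcomp (ordf P) ⟨hqm.1, hqm.2⟩ (ordg P) ⟨hrm.1, hrm.2⟩ hqr
    nlinarith
end

section
/- For positions P and Q, P → Q is a chomp move if and only if P^T → Q^T is a chomp move; consequently Mov(P^T) = {Q^T : Q ∈ Mov P}. -/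
/-- The conjugate (transposed) partition: `(transpose P)_i = #{j : P_j ≥ i+1}`. -/
def transpose (P : List ℕ) : List ℕ :=
  (List.range P.headI).map (fun i => P.countP (fun a => i + 1 ≤ a))

namespace ChompTransAux

/-- The number of entries of `L` that are at least `c`. -/
def N (L : List ℕ) (c : ℕ) : ℕ := L.countP (fun b => decide (c ≤ b))

lemma N_le_length (L : List ℕ) (c : ℕ) : N L c ≤ L.length :=
  List.countP_le_length

lemma N_tail_zero {p c : ℕ} {t : List ℕ} (hpt : ∀ b ∈ t, b ≤ p) (hcp : ¬ c ≤ p) :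
    N t c = 0 :=
  List.countP_eq_zero.mpr (fun b hb => by
    simp only [decide_eq_true_eq]
    intro h; exact hcp (h.trans (hpt b hb)))

lemma lt_N_iff {P : List ℕ} (hs : P.Pairwise (· ≥ ·)) (c i : ℕ) :
    i < N P c ↔ i < P.length ∧ c ≤ P.getD i 0 := by
  induction P generalizing i with
  | nil => simp [N]
  | cons p t ih =>
    have hpt : ∀ b ∈ t, b ≤ p := fun b hb => (List.pairwise_cons.mp hs).1 b hb
    have hts : t.Pairwise (· ≥ ·) := (List.pairwise_cons.mp hs).2
    have ih' := ih hts
    show i < (p :: t).countP (fun b => decide (c ≤ b)) ↔ _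
    rw [List.countP_cons]
    cases i with
    | zero =>
      simp only [List.length_cons, List.getD_cons_zero]
      by_cases hcp : c ≤ p
      · rw [if_pos (by simp [hcp])]
        omega
      · have h0 : N t c = 0 := N_tail_zero hpt hcp
        simp only [N] at h0
        rw [if_neg (by simp [hcp])]
        omega
    | succ j =>
      simp only [List.length_cons, List.getD_cons_succ]
      have h1 := ih' j
      simp only [N] at h1
      by_cases hcp : c ≤ p
      · rw [if_pos (by simp [hcp])]
        omega
      · have h0 : N t c = 0 := N_tail_zero hpt hcp
        simp only [N] at h0
        rw [if_neg (by simp [hcp])]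
        omega

lemma N_take {P : List ℕ} (hs : P.Pairwise (· ≥ ·)) (n c : ℕ) :
    N (P.take n) c = min n (N P c) := by
  induction P generalizing n with
  | nil => simp [N]
  | cons p t ih =>
    have hpt : ∀ b ∈ t, b ≤ p := fun b hb => (List.pairwise_cons.mp hs).1 b hb
    have hts : t.Pairwise (· ≥ ·) := (List.pairwise_cons.mp hs).2
    cases n with
    | zero => simp [N]
    | succ n =>
      have h1 := ih hts n
      show N (p :: t.take n) c = _
      show (p :: t.take n).countP _ = min (n+1) ((p :: t).countP _)
      rw [List.countP_cons, List.countP_cons]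
      change N (t.take n) c + _ = min (n+1) (N t c + _)
      by_cases hcp : c ≤ p
      · rw [if_pos (by simp [hcp])]
        omega
      · have h0 : N t c = 0 := N_tail_zero hpt hcp
        have h2 : N (t.take n) c = 0 := by rw [h1, h0]; omega
        rw [if_neg (by simp [hcp])]
        omega

lemma N_split (P : List ℕ) (n c : ℕ) : N P c = N (P.take n) c + N (P.drop n) c := by
  conv_lhs => rw [← List.take_append_drop n P]
  exact List.countP_append

lemma N_drop {P : List ℕ} (hs : P.Pairwise (· ≥ ·)) (n c : ℕ) :
    N (P.drop n) c = N P c - min n (N P c) := by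
  have h1 := N_split P n c
  have h2 := N_take hs n c
  omega

lemma mem_le_headI {P : List ℕ} (hs : P.Pairwise (· ≥ ·)) {b : ℕ} (hb : b ∈ P) :
    b ≤ P.headI := by
  cases P with
  | nil => simp at hb
  | cons p t =>
    rcases List.mem_cons.mp hb with rfl | hb
    · exact le_rfl
    · exact (List.pairwise_cons.mp hs).1 b hb

lemma N_one {P : List ℕ} (hP : IsPos P) : N P 1 = P.length :=
  List.countP_eq_length.mpr (fun a ha => by
    simpa [Nat.one_le_iff_ne_zero, Nat.pos_iff_ne_zero] using hP.2 a ha)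

lemma transpose_eq (P : List ℕ) :
    transpose P = (List.range P.headI).map (fun i => N P (i + 1)) := rfl

lemma length_transpose (P : List ℕ) : (transpose P).length = P.headI := by
  simp [transpose]

lemma isPos_transpose {P : List ℕ} (hP : IsPos P) : IsPos (transpose P) := by
  constructor
  · rw [transpose_eq]
    refine List.pairwise_map.mpr ((List.pairwise_lt_range (n := _)).imp ?_)
    intro i j hij
    exact List.countP_mono_left (fun b _ h => by
      simp only [decide_eq_true_eq] at h ⊢; omega)
  · intro b hb
    rw [transpose_eq, List.mem_map] at hb
    obtain ⟨i, hi, rfl⟩ := hb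
    rw [List.mem_range] at hi
    cases P with
    | nil => simp at hi
    | cons p t =>
      have : 0 < N (p :: t) (i + 1) := by
        rw [N, List.countP_pos_iff]
        exact ⟨p, List.mem_cons_self, by simp; exact hi⟩
      exact this

lemma count_range_lt (n m : ℕ) :
    (List.range n).countP (fun j => decide (j < m)) = min n m := by
  induction n with
  | zero => simp
  | succ n ih =>
    rw [List.range_succ, List.countP_append, ih]
    by_cases h : n < m <;> simp [h] <;> omega

lemma galois {P : List ℕ} (hP : IsPos P) (i k : ℕ) :
    k < N (transpose P) (i + 1) ↔ i < N P (k + 1) := by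
  have hmap : N (transpose P) (i + 1)
      = (List.range P.headI).countP (fun j => decide (i + 1 ≤ N P (j + 1))) := by
    rw [transpose_eq, N, List.countP_map]
    rfl
  by_cases hi : i < P.length
  · have hpred : ∀ j, (i + 1 ≤ N P (j + 1)) ↔ (j < P.getD i 0) := by
      intro j
      rw [show i + 1 ≤ N P (j+1) ↔ i < N P (j+1) from Iff.rfl, lt_N_iff hP.1]
      constructor
      · rintro ⟨-, h⟩; omega
      · intro h; exact ⟨hi, by omega⟩
    have : N (transpose P) (i + 1) = P.getD i 0 := by
      rw [hmap]
      have : (fun j => decide (i + 1 ≤ N P (j + 1)))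
           = (fun j => decide (j < P.getD i 0)) := by
        funext j
        exact decide_eq_decide.mpr (hpred j)
      rw [this, count_range_lt]
      have hmem : P.getD i 0 ∈ P := by
        rw [List.getD_eq_getElem _ _ hi]
        exact List.getElem_mem hi
      have := mem_le_headI hP.1 hmem
      omega
    rw [this, lt_N_iff hP.1]
    constructor
    · intro h; exact ⟨hi, by omega⟩
    · rintro ⟨-, h⟩; omega
  · have h0 : N (transpose P) (i + 1) = 0 := by
      rw [hmap]
      apply List.countP_eq_zero.mpr
      intro j _
      simp only [decide_eq_true_eq]
      have := N_le_length P (j + 1)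
      omega
    rw [h0]
    have := N_le_length P (k + 1)
    constructor
    · omega
    · intro h; omega

lemma nat_ext {m n : ℕ} (h : ∀ k, k < m ↔ k < n) : m = n := by
  have h1 := h m
  have h2 := h n
  omega

lemma eq_of_N_eq {P Q : List ℕ} (hP : IsPos P) (hQ : IsPos Q)
    (h : ∀ c, 0 < c → N P c = N Q c) : P = Q := by
  have hlen : P.length = Q.length := by
    rw [← N_one hP, ← N_one hQ]; exact h 1 one_pos
  apply List.ext_getElem hlen
  intro n h1 h2
  have key : ∀ c, 0 < c → (c ≤ P[n] ↔ c ≤ Q[n]) := by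
    intro c hc
    have a1 := lt_N_iff hP.1 c n
    have a2 := lt_N_iff hQ.1 c n
    rw [h c hc] at a1
    rw [List.getD_eq_getElem _ _ h1] at a1
    rw [List.getD_eq_getElem _ _ h2] at a2
    constructor
    · intro hcP
      exact (a2.mp ((a1.mpr ⟨h1, hcP⟩))).2
    · intro hcQ
      exact (a1.mp ((a2.mpr ⟨h2, hcQ⟩))).2
  have hp1 : 0 < P[n] := hP.2 _ (List.getElem_mem h1)
  have hq1 : 0 < Q[n] := hQ.2 _ (List.getElem_mem h2)
  have := key P[n] hp1
  have := key Q[n] hq1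
  omega

lemma isPos_chompAt {P : List ℕ} (hP : IsPos P) (x a : ℕ) : IsPos (chompAt P x a) := by
  constructor
  · apply List.Pairwise.filter
    rw [List.pairwise_append]
    have hcross : ∀ u ∈ P.take x, ∀ w ∈ P.drop x, u ≥ w := by
      have := hP.1
      conv at this => rw [← List.take_append_drop x P]
      exact (List.pairwise_append.mp this).2.2
    refine ⟨List.Pairwise.sublist (List.take_sublist x P) hP.1, ?_, ?_⟩
    · rw [List.pairwise_map]
      apply (List.Pairwise.sublist (List.drop_sublist x P) hP.1).imp
      intro u v h
      simp only [ge_iff_le] at h ⊢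
      omega
    · intro u hu v hv
      rw [List.mem_map] at hv
      obtain ⟨w, hw, rfl⟩ := hv
      have := hcross u hu w hw
      simp only [ge_iff_le] at this ⊢
      omega
  · intro b hb
    rw [chompAt, List.mem_filter] at hb
    simpa using hb.2

lemma N_chompAt {P : List ℕ} (hP : IsPos P) {c : ℕ} (hc : 0 < c) (x a : ℕ) :
    N (chompAt P x a) c
      = min x (N P c) + (if c ≤ a then N P c - min x (N P c) else 0) := by
  rw [chompAt]
  show List.countP _ _ = _
  rw [List.countP_filter]
  have hpr : (fun b => decide (c ≤ b) && decide (0 < b)) = (fun b => decide (c ≤ b)) := by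
    funext b
    by_cases h : c ≤ b
    · simp [h]; omega
    · simp [h]
  rw [hpr, List.countP_append, List.countP_map]
  have h1 : (P.take x).countP (fun b => decide (c ≤ b)) = min x (N P c) := N_take hP.1 x c
  rw [h1]
  have h2 : ((fun b => decide (c ≤ b)) ∘ (fun b => min b a)) = (fun b => decide (c ≤ min b a)) := rfl
  rw [h2]
  by_cases hca : c ≤ a
  · have : (fun b => decide (c ≤ min b a)) = (fun b => decide (c ≤ b)) := by
      funext b
      apply decide_eq_decide.mpr
      omega
    rw [this, if_pos hca]
    have := N_drop hP.1 x c
    rw [N] at this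
    omega
  · have : (P.drop x).countP (fun b => decide (c ≤ min b a)) = 0 := by
      apply List.countP_eq_zero.mpr
      intro b _
      simp only [decide_eq_true_eq]
      omega
    rw [this, if_neg hca]

lemma transpose_chompAt {P : List ℕ} (hP : IsPos P) (x a : ℕ) :
    transpose (chompAt P x a) = chompAt (transpose P) a x := by
  apply eq_of_N_eq (isPos_transpose (isPos_chompAt hP x a))
    (isPos_chompAt (isPos_transpose hP) a x)
  intro c hc
  obtain ⟨i, rfl⟩ : ∃ i, c = i + 1 := ⟨c - 1, by omega⟩
  apply nat_ext
  intro k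
  rw [galois (isPos_chompAt hP x a), N_chompAt hP (by omega : (0:ℕ) < k + 1) x a,
      N_chompAt (isPos_transpose hP) (by omega : (0:ℕ) < i + 1) a x]
  have hg := galois hP i k
  split_ifs <;> omega

lemma transpose_transpose {P : List ℕ} (hP : IsPos P) :
    transpose (transpose P) = P := by
  apply eq_of_N_eq (isPos_transpose (isPos_transpose hP)) hP
  intro c hc
  obtain ⟨i, rfl⟩ : ∃ i, c = i + 1 := ⟨c - 1, by omega⟩
  apply nat_ext
  intro k
  rw [galois (isPos_transpose hP)]
  exact galois hP k i

lemma chompAt_eq_self {P : List ℕ} (hP : IsPos P) (x : ℕ) {a : ℕ}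
    (ha : P.headI ≤ a) : chompAt P x a = P := by
  rw [chompAt]
  have hmap : (P.drop x).map (fun b => min b a) = P.drop x := by
    apply List.map_congr_left ?_ |>.trans (List.map_id _)
    intro b hb
    have : b ≤ P.headI := mem_le_headI hP.1 ((List.drop_sublist x P).subset hb)
    simp only [id]
    omega
  rw [hmap, List.take_append_drop]
  apply List.filter_eq_self.mpr
  intro b hb
  simpa using hP.2 b hb

lemma move_fwd {P Q : List ℕ} (hP : IsPos P) (h : ChompMove P Q) :
    ChompMove (transpose P) (transpose Q) := by
  obtain ⟨x, a, hx, hQ, hne⟩ := h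
  have hQpos : IsPos Q := hQ ▸ isPos_chompAt hP x a
  have ha : a < P.headI := by
    by_contra h'
    push_neg at h'
    exact hne (hQ.trans (chompAt_eq_self hP x h'))
  refine ⟨a, x, ?_, ?_, ?_⟩
  · rw [length_transpose]; exact ha
  · rw [hQ, transpose_chompAt hP]
  · intro hEq
    apply hne
    have := congrArg transpose hEq
    rwa [transpose_transpose hQpos, transpose_transpose hP] at this

end ChompTransAux

/-- `P → Q` iff `Pᵀ → Qᵀ`; consequently `Mov (Pᵀ) = {Qᵀ : Q ∈ Mov P}`. -/
theorem chompMove_transpose :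
    (∀ P Q : List ℕ, IsPos P → IsPos Q →
      (ChompMove P Q ↔ ChompMove (transpose P) (transpose Q))) ∧
    (∀ P : List ℕ, IsPos P →
      {R | ChompMove (transpose P) R} = transpose '' {Q | ChompMove P Q}) := by
  open ChompTransAux in
  have fwd : ∀ {P Q : List ℕ}, IsPos P → ChompMove P Q → ChompMove (transpose P) (transpose Q) :=
    fun hP h => move_fwd hP h
  constructor
  · intro P Q hP hQ
    constructor
    · exact fwd hP
    · intro h
      have := fwd (isPos_transpose hP) h
      rwa [transpose_transpose hP, transpose_transpose hQ] at this
  · intro P hP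
    ext R
    simp only [Set.mem_setOf_eq, Set.mem_image]
    constructor
    · intro hR
      have hRpos : IsPos R := by
        obtain ⟨x, a, hx, hEq, -⟩ := hR
        exact hEq ▸ isPos_chompAt (isPos_transpose hP) x a
      refine ⟨transpose R, ?_, transpose_transpose hRpos⟩
      have := fwd (isPos_transpose hP) hR
      rwa [transpose_transpose hP] at this
    · rintro ⟨Q, hQm, rfl⟩
      exact fwd hP hQm
end

section
/- For an n-player rule f = (α_1,...,α_n), define m_f = min{i ≥ 1 : α_{i+1} < α_i} (with α_{n+1} := α_1). Then for the single-row positions: ord_f((i)) = i if i ≤ m_f, and ord_f((i)) = m_f if i > m_f. Consequently, for two rules f and g, ord_f P = ord_g P for all P ∈ D_1 if and only if m_f = m_g. -/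
/-- The rule `α` with the wraparound convention `α (n+1) := α 1`. -/
def wrapRule (n : ℕ) (α : ℕ → ℝ) : ℕ → ℝ := fun i => if i = n + 1 then α 1 else α i

/-- `m_f = min {i ≥ 1 : α (i+1) < α i}`, with `α (n+1) := α 1`. -/
noncomputable def mIndex (n : ℕ) (α : ℕ → ℝ) : ℕ :=
  sInf {i | 1 ≤ i ∧ wrapRule n α (i + 1) < wrapRule n α i}

lemma wrap_eq (n : ℕ) (α : ℕ → ℝ) {i : ℕ} (hi : i ≤ n) : wrapRule n α i = α i := by
  show (if i = n + 1 then α 1 else α i) = α i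
  rw [if_neg]; omega

lemma mIndex_facts (n : ℕ) (hn : 2 ≤ n) (α : ℕ → ℝ) (hα : Set.InjOn α (Set.Icc 1 n)) :
    1 ≤ mIndex n α ∧ mIndex n α ≤ n ∧
    (∀ i, 1 ≤ i → i < mIndex n α → α i < α (i + 1)) ∧
    wrapRule n α (mIndex n α + 1) < α (mIndex n α) := by
  set S : Set ℕ := {i | 1 ≤ i ∧ wrapRule n α (i + 1) < wrapRule n α i} with hS
  have hwit : ∃ i ∈ S, i ≤ n := by
    by_contra hc
    push_neg at hc
    have hmono : ∀ i, 1 ≤ i → i ≤ n → wrapRule n α i ≤ wrapRule n α (i + 1) := by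
      intro i h1 h2
      by_contra hlt
      push_neg at hlt
      exact absurd (hc i ⟨h1, hlt⟩) (by omega)
    have hchain : ∀ i, 1 ≤ i → i ≤ n → α 1 ≤ α i := by
      intro i
      induction i with
      | zero => omega
      | succ j ih =>
        intro _ h2
        rcases Nat.eq_zero_or_pos j with rfl | hj
        · simp
        · have := hmono j hj (by omega)
          rw [wrap_eq n α (by omega : j ≤ n), wrap_eq n α (by omega : j + 1 ≤ n)] at this
          exact le_trans (ih hj (by omega)) this
    have h1n : α 1 ≤ α n := hchain n (by omega) le_rfl
    have hn1 : α n ≤ α 1 := by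
      have := hmono n (by omega) le_rfl
      rw [wrap_eq n α le_rfl] at this
      simpa [wrapRule] using this
    have : (1 : ℕ) = n := hα ⟨le_rfl, by omega⟩ ⟨by omega, le_rfl⟩ (le_antisymm h1n hn1)
    omega
  obtain ⟨i0, hi0S, hi0n⟩ := hwit
  have hne : S.Nonempty := ⟨i0, hi0S⟩
  have hmem : mIndex n α ∈ S := Nat.sInf_mem hne
  have hle : mIndex n α ≤ n := le_trans (Nat.sInf_le hi0S) hi0n
  refine ⟨hmem.1, hle, ?_, ?_⟩
  · intro i h1 h2
    have hiS : i ∉ S := Nat.notMem_of_lt_sInf h2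
    have : wrapRule n α i ≤ wrapRule n α (i + 1) := by
      by_contra hlt
      push_neg at hlt
      exact hiS ⟨h1, hlt⟩
    rw [wrap_eq n α (by omega : i ≤ n), wrap_eq n α (by omega : i + 1 ≤ n)] at this
    rcases lt_or_eq_of_le this with h | h
    · exact h
    · exact absurd (hα ⟨h1, by omega⟩ ⟨by omega, by omega⟩ h) (by omega)
  · have := hmem.2
    rwa [wrap_eq n α hle] at this

def rowPos : ℕ → List ℕ := fun i => if i = 0 then [] else [i]

lemma rowPos_isPos (i : ℕ) : IsPos (rowPos i) := by
  rcases Nat.eq_zero_or_pos i with rfl | hi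
  · exact ⟨List.Pairwise.nil, by simp [rowPos]⟩
  · refine ⟨?_, ?_⟩
    · show List.Pairwise _ (if i = 0 then [] else [i])
      rw [if_neg (by omega : ¬ i = 0)]
      exact List.pairwise_singleton _ i
    · intro a ha
      simp only [rowPos, if_neg (by omega : ¬ i = 0), List.mem_singleton] at ha
      omega

lemma rowPos_ne (i : ℕ) (hi : 1 ≤ i) : rowPos i ≠ [] := by
  show (if i = 0 then [] else [i]) ≠ []
  rw [if_neg (by omega : ¬ i = 0)]
  simp

lemma chompAt_row (i a : ℕ) (hi : 1 ≤ i) :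
    chompAt [i] 0 a = if a = 0 then [] else [min i a] := by
  rcases Nat.eq_zero_or_pos a with rfl | ha
  · simp [chompAt]
  · have h0 : 0 < min i a := by omega
    simp only [chompAt, List.take_nil, List.take_zero, List.drop_zero, List.nil_append,
      List.map_cons, List.map_nil]
    rw [if_neg (by omega : ¬ a = 0)]
    simp [h0]

lemma row_move (i : ℕ) (hi : 1 ≤ i) (Q : List ℕ) :
    ChompMove [i] Q ↔ ∃ k, k < i ∧ Q = rowPos k := by
  constructor
  · rintro ⟨x, a, hx, rfl, hne⟩
    simp at hx
    subst hx
    rw [chompAt_row i a hi] at hne ⊢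
    rcases Nat.eq_zero_or_pos a with rfl | ha
    · exact ⟨0, by omega, by simp [rowPos]⟩
    · have hai : a < i := by
        by_contra hc
        push_neg at hc
        rw [if_neg (by omega : ¬ a = 0), min_eq_left hc] at hne
        exact hne rfl
      refine ⟨a, hai, ?_⟩
      rw [if_neg (by omega : ¬ a = 0), min_eq_right (le_of_lt hai)]
      show _ = (if a = 0 then ([] : List ℕ) else [a])
      rw [if_neg (by omega : ¬ a = 0)]
  · rintro ⟨k, hk, rfl⟩
    refine ⟨0, k, by simp, ?_, ?_⟩
    · rw [chompAt_row i k hi]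
      rcases Nat.eq_zero_or_pos k with rfl | hk'
      · simp [rowPos]
      · show (if k = 0 then ([] : List ℕ) else [k]) = _
        rw [if_neg (by omega : ¬ k = 0), if_neg (by omega : ¬ k = 0),
          min_eq_right (le_of_lt hk)]
    · rcases Nat.eq_zero_or_pos k with rfl | hk'
      · simp [rowPos]
      · show (if k = 0 then ([] : List ℕ) else [k]) ≠ [i]
        rw [if_neg (by omega : ¬ k = 0)]
        simp only [ne_eq, List.cons.injEq, and_true]
        omega

def onesPos : ℕ → List ℕ := fun L => List.replicate L 1

lemma onesPos_isPos (L : ℕ) : IsPos (onesPos L) := by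
  constructor
  · induction L with
    | zero => exact List.Pairwise.nil
    | succ L ih =>
      rw [show onesPos (L + 1) = List.replicate (L + 1) 1 from rfl, List.replicate_succ, List.pairwise_cons]
      exact ⟨fun b hb => by simp at hb; omega, ih⟩
  · intro a ha
    simp [onesPos] at ha
    omega

lemma onesPos_ne (L : ℕ) (hL : 1 ≤ L) : onesPos L ≠ [] := by
  simp only [onesPos, ne_eq, List.replicate_eq_nil_iff]
  omega

lemma chompAt_ones (L x a : ℕ) (hx : x ≤ L) :
    chompAt (List.replicate L 1) x a =
      if a = 0 then List.replicate x 1 else List.replicate L 1 := by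
  rw [chompAt, List.take_replicate, List.drop_replicate, List.map_replicate]
  rcases Nat.eq_zero_or_pos a with rfl | ha
  · simp [List.filter_append, List.filter_replicate, min_eq_left hx]
  · have h1 : min 1 a = 1 := by omega
    rw [h1]
    simp only [List.filter_append, List.filter_replicate, min_eq_left hx]
    rw [if_neg (by omega : ¬ a = 0)]
    simp only [decide_eq_true_eq, Nat.lt_irrefl, if_pos (by norm_num : 0 < 1)]
    rw [← List.replicate_add]
    congr 1
    omega

lemma ones_move (L : ℕ) (hL : 1 ≤ L) (Q : List ℕ) :
    ChompMove (List.replicate L 1) Q ↔ ∃ k, k < L ∧ Q = List.replicate k 1 := by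
  constructor
  · rintro ⟨x, a, hx, rfl, hne⟩
    rw [List.length_replicate] at hx
    rw [chompAt_ones L x a (le_of_lt hx)] at hne ⊢
    rcases Nat.eq_zero_or_pos a with rfl | ha
    · exact ⟨x, hx, by simp⟩
    · rw [if_neg (by omega : ¬ a = 0)] at hne
      exact absurd rfl hne
  · rintro ⟨k, hk, rfl⟩
    refine ⟨k, 0, by simpa using hk, ?_, ?_⟩
    · rw [chompAt_ones L k 0 (le_of_lt hk)]; simp
    · intro h
      have := congrArg List.length h
      simp at this
      omega

lemma ord_chain (n : ℕ) (hn : 2 ≤ n) (α : ℕ → ℝ) (hα : Set.InjOn α (Set.Icc 1 n))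
    (ord : List ℕ → ℕ) (h : IsOrd n α ord)
    (r : ℕ → List ℕ) (hr0 : r 0 = [])
    (hpos : ∀ i, IsPos (r i)) (hne : ∀ i, 1 ≤ i → r i ≠ [])
    (hmov : ∀ i, 1 ≤ i → ∀ Q, ChompMove (r i) Q ↔ ∃ k, k < i ∧ Q = r k) :
    ∀ i, ord (r i) = min i (mIndex n α) := by
  obtain ⟨hM1, hMn, hstep, hwrap⟩ := mIndex_facts n hn α hα
  set M := mIndex n α with hMdef
  have hchain : ∀ b a, 1 ≤ a → a < b → b ≤ M → α a < α b := by
    intro b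
    induction b with
    | zero => intro a _ h2 _; omega
    | succ b ih =>
      intro a h1 h2 h3
      rcases eq_or_lt_of_le (Nat.lt_succ_iff.mp h2) with rfl | hlt
      · exact hstep a h1 (by omega)
      · exact lt_trans (ih a h1 hlt (by omega)) (hstep b (by omega) (by omega))
  intro i
  induction i using Nat.strong_induction_on with
  | _ i IH =>
    rcases Nat.eq_zero_or_pos i with rfl | hi
    · simp [hr0, h.ord_empty]
    · obtain ⟨Q, hQmove, hQn, hQord⟩ := h.exists_best (r i) (hpos i) (hne i hi)
      obtain ⟨k, hk, rfl⟩ := (hmov i hi Q).mp hQmove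
      have hkord : ord (r k) = min k M := IH k hk
      set t := min i M with ht
      have ht1 : 1 ≤ t := by omega
      have htM : t ≤ M := by omega
      -- the move to r (t - 1) gives α t ≤ α (ord (r i))
      have hmv : ChompMove (r i) (r (t - 1)) := (hmov i hi (r (t - 1))).mpr ⟨t - 1, by omega, rfl⟩
      have hto : ord (r (t - 1)) = t - 1 := by
        rw [IH (t - 1) (by omega)]; omega
      have hlb : α t ≤ α (ord (r i)) := by
        have := h.le_best (r i) (hpos i) (hne i hi) (r (t - 1)) hmv
          (by rw [hto]; omega)
        rwa [hto, (by omega : t - 1 + 1 = t)] at this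
      rw [hQord, hkord]
      -- ord (r i) = min k M + 1 ≤ t + 1
      have hub : min k M + 1 ≤ t + 1 := by omega
      rcases eq_or_lt_of_le hub with heq | hlt
      · -- ord (r i) = t + 1 : only possible if min k M = M = t and M ≠ n
        exfalso
        have hkM : min k M = M := by omega
        have htM' : t = M := by omega
        have hMn' : M < n := by
          rcases eq_or_lt_of_le hMn with heqn | h'
          · exact absurd (by rw [hkord, hkM, heqn]) hQn
          · exact h'
        have : wrapRule n α (M + 1) = α (M + 1) := wrap_eq n α (by omega)
        rw [this] at hwrap
        rw [hQord, hkord, heq] at hlb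
        rw [htM'] at hlb
        exact absurd (lt_of_le_of_lt hlb hwrap) (lt_irrefl _)
      · -- min k M + 1 ≤ t
        have hle : min k M + 1 ≤ t := by omega
        rcases eq_or_lt_of_le hle with heq | hlt'
        · omega
        · exfalso
          have := hchain t (min k M + 1) (by omega) hlt' htM
          rw [hQord, hkord] at hlb
          exact absurd (lt_of_le_of_lt hlb this) (lt_irrefl _)

lemma rowPos_eq (i : ℕ) (hi : 1 ≤ i) : rowPos i = [i] := by
  show (if i = 0 then [] else [i]) = [i]
  rw [if_neg (by omega : ¬ i = 0)]


/-- single-row ordinals are `ord (i) = min i m_f`, and two rules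
agree on all of `D₁` (single rows and single columns) iff `m_f = m_g`. -/
theorem ord_singleRow_and_d1_iso (n m : ℕ) (hn : 2 ≤ n) (hm : 2 ≤ m)
    (α β : ℕ → ℝ) (hα : Set.InjOn α (Set.Icc 1 n)) (hβ : Set.InjOn β (Set.Icc 1 m))
    (ordf ordg : List ℕ → ℕ) (hf : IsOrd n α ordf) (hg : IsOrd m β ordg) :
    (∀ i : ℕ, 1 ≤ i →
        (i ≤ mIndex n α → ordf [i] = i) ∧ (mIndex n α < i → ordf [i] = mIndex n α)) ∧
    ((∀ P, IsPos P → P ≠ [] → min P.headI P.length = 1 → ordf P = ordg P) ↔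
      mIndex n α = mIndex m β) := by
  obtain ⟨hMf1, hMfn, -, -⟩ := mIndex_facts n hn α hα
  obtain ⟨hMg1, hMgm, -, -⟩ := mIndex_facts m hm β hβ
  have hrowmov : ∀ i, 1 ≤ i → ∀ Q, ChompMove (rowPos i) Q ↔ ∃ k, k < i ∧ Q = rowPos k := by
    intro i hi Q
    rw [rowPos_eq i hi]
    exact row_move i hi Q
  have hrowf : ∀ i, 1 ≤ i → ordf [i] = min i (mIndex n α) := by
    intro i hi
    have := ord_chain n hn α hα ordf hf rowPos rfl rowPos_isPos rowPos_ne hrowmov i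
    rwa [rowPos_eq i hi] at this
  have hrowg : ∀ i, 1 ≤ i → ordg [i] = min i (mIndex m β) := by
    intro i hi
    have := ord_chain m hm β hβ ordg hg rowPos rfl rowPos_isPos rowPos_ne hrowmov i
    rwa [rowPos_eq i hi] at this
  have honef : ∀ L, ordf (List.replicate L 1) = min L (mIndex n α) :=
    ord_chain n hn α hα ordf hf onesPos rfl onesPos_isPos onesPos_ne ones_move
  have honeg : ∀ L, ordg (List.replicate L 1) = min L (mIndex m β) :=
    ord_chain m hm β hβ ordg hg onesPos rfl onesPos_isPos onesPos_ne ones_move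
  constructor
  · intro i hi
    constructor
    · intro hle; rw [hrowf i hi]; omega
    · intro hlt; rw [hrowf i hi]; omega
  · constructor
    · intro hag
      have key : ∀ i, 1 ≤ i → min i (mIndex n α) = min i (mIndex m β) := by
        intro i hi
        have h1 := hrowf i hi
        have h2 := hrowg i hi
        have h3 := hag [i] (rowPos_eq i hi ▸ rowPos_isPos i) (by simp)
          (by simp; omega)
        omega
      have k1 := key (mIndex n α) hMf1
      have k2 := key (mIndex m β) hMg1
      omega
    · intro heq P hP hPne hP1
      have hcase : P.headI = 1 ∨ P.length = 1 := by omega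
      rcases hcase with hh | hl
      · have hrep : P = List.replicate P.length 1 := by
          rw [List.eq_replicate_iff]
          refine ⟨rfl, ?_⟩
          intro c hc
          rcases P with _ | ⟨b, t⟩
          · exact absurd rfl hPne
          · simp at hh
            subst hh
            have hs := (List.pairwise_cons.mp hP.1).1
            have hp := hP.2 c hc
            rcases List.mem_cons.mp hc with rfl | hct
            · rfl
            · have := hs c hct
              omega
        rw [hrep, honef, honeg, heq]
      · obtain ⟨a, rfl⟩ := List.length_eq_one_iff.mp hl
        have ha : 1 ≤ a := hP.2 a (by simp)
        rw [hrowf a ha, hrowg a ha, heq]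
end
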